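/- Let m ≥ 5 be an integer with gcd(m,3) = 1. Then for every integer t with 0 ≤ t ≤ m−1 and every integer N ≥ 1, |F_{t/m}(N)| ≤ μ_m · N^{λ_m}. -/

import Mathlib

open Finset Filter Topology

noncomputable section

/-- `s n` is the number of 1's in the binary expansion of `n`. -/
def s (n : ℕ) : ℕ := (Nat.digits 2 n).count 1

/-- `S m x = ∑_{0 ≤ n < x, m ∣ n} (-1)^(s n)`. -/
def S (m x : ℕ) : ℝ := ∑ n ∈ Finset.range x, if m ∣ n then (-1 : ℝ) ^ (s n) else 0

/-- `F α N = ∑_{n=0}^{N-1} e^{2πi(αn + s(n)/2)}`. -/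
def F (α : ℝ) (N : ℕ) : ℂ :=
  ∑ n ∈ Finset.range N, Complex.exp (2 * Real.pi * Complex.I * ((α : ℂ) * n + (s n : ℂ) / 2))

/-- `bsq m = b_m ^ 2`, defined by cases on `m mod 3`. -/
def bsq (m : ℕ) : ℝ :=
  if m % 3 = 0 then
    Real.sin (Real.pi / 3 * (1 + 3 / m)) * (Real.sqrt 3 - Real.sin (Real.pi / 3 * (1 + 3 / m)))
  else if m % 3 = 1 then
    Real.sin (Real.pi / 3 * (1 - 1 / m)) * (Real.sqrt 3 - Real.sin (Real.pi / 3 * (1 - 1 / m)))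
  else
    Real.sin (Real.pi / 3 * (1 + 1 / m)) * (Real.sqrt 3 - Real.sin (Real.pi / 3 * (1 + 1 / m)))

/-- `b m` is the positive real number with `(b m)^2 = bsq m`. -/
def b (m : ℕ) : ℝ := Real.sqrt (bsq m)

/-- `lam m = λ_m = 1 + log₂ b_m`. -/
def lam (m : ℕ) : ℝ := 1 + Real.logb 2 (b m)

/-- `mu m = μ_m = (2 b_m + 1)/(2 b_m - 1)`. -/
def mu (m : ℕ) : ℝ := (2 * b m + 1) / (2 * b m - 1)

/-- `U m x`: positive integers `≤ x` divisible by `m` and not by 3. -/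
def U (m x : ℕ) : Finset ℕ := (Finset.Icc 1 x).filter (fun n => m ∣ n ∧ ¬ (3 ∣ n))

/-- `V p n`: positive integers `≤ n` whose least prime divisor is `p`. -/
def V (p n : ℕ) : Finset ℕ := (Finset.Icc 1 n).filter (fun j => Nat.minFac j = p)

set_option maxHeartbeats 2000000

lemma s_two_mul (k : ℕ) : s (2*k) = s k := by
  rcases Nat.eq_zero_or_pos k with rfl | hk
  · rfl
  · unfold s
    rw [Nat.digits_def' (by norm_num : 1 < 2) (by omega : 0 < 2*k)]
    simp [Nat.mul_div_cancel_left k (by norm_num : 0 < 2), Nat.mul_mod_right]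

lemma s_two_mul_add_one (k : ℕ) : s (2*k+1) = s k + 1 := by
  unfold s
  rw [Nat.digits_def' (by norm_num : 1 < 2) (by omega : 0 < 2*k+1)]
  have h1 : (2*k+1) % 2 = 1 := by omega
  have h2 : (2*k+1) / 2 = k := by omega
  rw [h1, h2, List.count_cons]
  simp [Nat.add_comm]

lemma abs_term (α : ℝ) (n : ℕ) :
    ‖Complex.exp (2 * Real.pi * Complex.I * ((α : ℂ) * n + (s n : ℂ) / 2))‖ = 1 := by
  rw [Complex.norm_exp]
  have : (2 * (Real.pi:ℂ) * Complex.I * ((α : ℂ) * n + (s n : ℂ) / 2)).re = 0 := by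
    simp [Complex.mul_re, Complex.mul_im]
  rw [this, Real.exp_zero]

lemma F_double (α : ℝ) (M : ℕ) :
    F α (2*M) = (1 - Complex.exp (2 * Real.pi * Complex.I * (α:ℂ))) * F (2*α) M := by
  induction M with
  | zero => simp [F]
  | succ M ih =>
    have h2 : 2*(M+1) = (2*M+1)+1 := by ring
    rw [h2]
    unfold F at *
    rw [Finset.sum_range_succ, Finset.sum_range_succ, ih, Finset.sum_range_succ]
    have ho : s (2*M+1) = s M + 1 := s_two_mul_add_one M
    have he : s (2*M) = s M := s_two_mul M
    rw [ho, he]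
    have key : Complex.exp (2 * Real.pi * Complex.I * ((α : ℂ) * (2*M) + (s M : ℂ) / 2))
        + Complex.exp (2 * Real.pi * Complex.I * ((α : ℂ) * (2*M+1) + ((s M : ℂ)+1) / 2))
        = (1 - Complex.exp (2 * Real.pi * Complex.I * (α:ℂ))) *
          Complex.exp (2 * Real.pi * Complex.I * (((2*α : ℝ) : ℂ) * M + (s M : ℂ) / 2)) := by
      have e1 : (2 * (Real.pi:ℂ) * Complex.I * ((α : ℂ) * (2*M) + (s M : ℂ) / 2))
          = 2 * Real.pi * Complex.I * (((2*α : ℝ) : ℂ) * M + (s M : ℂ) / 2) := by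
        push_cast; ring
      have e2 : (2 * (Real.pi:ℂ) * Complex.I * ((α : ℂ) * (2*M+1) + ((s M : ℂ)+1) / 2))
          = (2 * Real.pi * Complex.I * (((2*α : ℝ) : ℂ) * M + (s M : ℂ) / 2))
            + 2 * Real.pi * Complex.I * (α:ℂ) + Real.pi * Complex.I := by
        push_cast; ring
      rw [e1, e2, Complex.exp_add, Complex.exp_add, Complex.exp_pi_mul_I]
      ring
    push_cast at key ⊢
    linear_combination key

lemma abs_one_sub_exp (x : ℝ) :
    ‖1 - Complex.exp (2 * Real.pi * Complex.I * (x:ℂ))‖ = 2 * |Real.sin (Real.pi * x)| := by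
  have h : (2 * (Real.pi:ℂ) * Complex.I * (x:ℂ)) = ((2 * Real.pi * x : ℝ) : ℂ) * Complex.I := by
    push_cast; ring
  rw [h, Complex.exp_mul_I, ← Complex.ofReal_cos, ← Complex.ofReal_sin]
  set y := 2 * Real.pi * x with hy
  have habs : ‖1 - (↑(Real.cos y) + ↑(Real.sin y) * Complex.I)‖
      = Real.sqrt ((1 - Real.cos y)^2 + (Real.sin y)^2) := by
    rw [Complex.norm_def, Complex.normSq_apply]
    congr 1
    simp [Complex.cos_ofReal_re, Complex.sin_ofReal_re]
    ring
  rw [habs]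
  have h2 : (1 - Real.cos y)^2 + (Real.sin y)^2 = (2 * Real.sin (Real.pi * x))^2 := by
    have hc : Real.cos y = 1 - 2 * Real.sin (Real.pi*x)^2 := by
      rw [hy]
      have : 2 * Real.pi * x = 2*(Real.pi*x) := by ring
      rw [this, Real.cos_two_mul, Real.cos_sq']
      ring
    nlinarith [Real.sin_sq_add_cos_sq y, Real.sin_sq_add_cos_sq (Real.pi*x), hc]
  rw [h2, Real.sqrt_sq_eq_abs, abs_mul]
  norm_num

/-- `sa m t = |sin(π t / m)|`. -/
def sa (m t : ℕ) : ℝ := |Real.sin (Real.pi * t / m)|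

lemma sa_nonneg (m t : ℕ) : 0 ≤ sa m t := abs_nonneg _
lemma sa_le_one (m t : ℕ) : sa m t ≤ 1 := abs_le.mpr ⟨by nlinarith [Real.neg_one_le_sin (Real.pi * t / m)], Real.sin_le_one _⟩

lemma unroll (m : ℕ) : ∀ j : ℕ, ∀ N : ℕ, N < 2^j → ∀ t : ℕ,
    ‖F ((t:ℝ)/m) N‖ ≤
      ∑ i ∈ range j, ((N / 2^i % 2 : ℕ) : ℝ) * ∏ k ∈ range i, (2 * sa m (2^k * t)) := by
  intro j
  induction j with
  | zero =>
    intro N hN t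
    interval_cases N
    simp [F]
  | succ j ih =>
    intro N hN t
    have hM : N / 2 < 2^j := by
      have h2 : (2:ℕ)^(j+1) = 2*2^j := by ring
      omega
    set M := N / 2 with hMdef
    have hsa0 : (0:ℝ) ≤ 2 * sa m t := by have := sa_nonneg m t; linarith
    have hstep : ‖F ((t:ℝ)/m) N‖ ≤
        ‖F ((t:ℝ)/m) (2*M)‖ + ((N % 2 : ℕ) : ℝ) := by
      rcases Nat.even_or_odd N with he | ho
      · have h0 : N % 2 = 0 := Nat.even_iff.mp he
        have hN2 : N = 2*M := by omega
        rw [← hN2, h0]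
        simp
      · have h1 : N % 2 = 1 := Nat.odd_iff.mp ho
        have hN2 : N = 2*M + 1 := by omega
        rw [hN2]
        have hmod : (2*M+1) % 2 = 1 := by omega
        rw [hmod]
        unfold F
        rw [Finset.sum_range_succ]
        refine le_trans (norm_add_le _ _) ?_
        rw [abs_term]
        norm_num
    have hdb : ‖F ((t:ℝ)/m) (2*M)‖ =
        (2 * sa m t) * ‖F (((2*t:ℕ):ℝ)/m) M‖ := by
      have harg : (2 * ((t:ℝ)/m)) = (((2*t:ℕ):ℝ)/m) := by push_cast; ring
      rw [F_double, ← harg, norm_mul, abs_one_sub_exp]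
      unfold sa
      rw [mul_div_assoc]
    have hih := ih M hM (2*t)
    have main : ‖F ((t:ℝ)/m) N‖ ≤
        (2 * sa m t) * (∑ i ∈ range j, ((M / 2^i % 2 : ℕ) : ℝ) *
          ∏ k ∈ range i, (2 * sa m (2^k * (2*t)))) + ((N % 2 : ℕ) : ℝ) := by
      refine le_trans hstep ?_
      gcongr
      rw [hdb]
      exact mul_le_mul_of_nonneg_left hih hsa0
    refine le_trans main (le_of_eq ?_)
    rw [Finset.sum_range_succ' (fun i => ((N / 2^i % 2 : ℕ) : ℝ) * ∏ k ∈ range i, (2 * sa m (2^k * t))) j]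
    have hf0 : ((N / 2^0 % 2 : ℕ) : ℝ) * ∏ k ∈ range 0, (2 * sa m (2^k * t)) = ((N % 2 : ℕ):ℝ) := by
      simp
    rw [hf0, Finset.mul_sum]
    congr 1
    apply Finset.sum_congr rfl
    intro i _
    have hd : N / 2^(i+1) = M / 2^i := by
      rw [hMdef, Nat.div_div_eq_div_mul, pow_succ']
    rw [hd, Finset.prod_range_succ' (fun k => 2 * sa m (2^k * t)) i]
    have hpe : ∀ k, (2:ℕ)^(k+1) * t = 2^k * (2*t) := by intro k; ring
    have : (∏ k ∈ range i, (2 * sa m (2^(k+1) * t))) = ∏ k ∈ range i, (2 * sa m (2^k * (2*t))) := by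
      apply Finset.prod_congr rfl
      intro k _
      rw [hpe k]
    rw [this]
    simp only [pow_zero, one_mul]
    ring

lemma sqrt3_sq : Real.sqrt 3 ^ 2 = 3 := Real.sq_sqrt (by norm_num)
lemma sqrt3_le : Real.sqrt 3 ≤ 1.74 := by
  nlinarith [sqrt3_sq, Real.sqrt_nonneg 3]
lemma sqrt3_ge : (1.7:ℝ) ≤ Real.sqrt 3 := by
  nlinarith [sqrt3_sq, Real.sqrt_nonneg 3]

lemma pi_div_le (m : ℕ) (hm : 5 ≤ m) : Real.pi / m ≤ 0.63 := by
  have m0 : (5:ℝ) ≤ m := by exact_mod_cast hm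
  have := Real.pi_lt_d2
  rw [div_le_iff₀ (by linarith)]
  nlinarith

lemma bsq_eq (m : ℕ) (hm : 5 ≤ m) (h3 : m % 3 = 1 ∨ m % 3 = 2) :
    ∃ d : ℝ, bsq m = 3/4 - d^2 ∧ |d| ≤ 0.19 * (Real.pi / m) := by
  have m0 : (0:ℝ) < m := by positivity
  have m5 : (5:ℝ) ≤ m := by exact_mod_cast hm
  set u := Real.pi / (6*m) with hu
  have hu0 : 0 < u := by positivity
  have hpi := Real.pi_pos
  have hc : Real.sqrt 3 ^ 2 = 3 := sqrt3_sq
  rcases h3 with h1 | h2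
  · -- m % 3 = 1, m ≥ 7
    have hm7 : 7 ≤ m := by omega
    have m7 : (7:ℝ) ≤ m := by exact_mod_cast hm7
    have hule : u ≤ Real.pi/42 := by
      rw [hu, div_le_div_iff₀ (by linarith) (by norm_num)]
      nlinarith
    have hule' : u ≤ 0.075 := by
      have := Real.pi_lt_d2
      nlinarith
    unfold bsq
    rw [if_neg (by omega), if_pos h1]
    set θ := Real.pi / 3 * (1 - 1/(m:ℝ)) with hθ
    refine ⟨Real.sin θ - Real.sqrt 3 / 2, by linear_combination hc/4, ?_⟩
    have hθu : θ = Real.pi/3 - 2*u := by rw [hθ, hu]; field_simp; ring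
    have hd : Real.sin θ - Real.sqrt 3 / 2 = -(2 * Real.sin u * Real.cos (Real.pi/3 - u)) := by
      rw [hθu, ← Real.sin_pi_div_three, Real.sin_sub_sin]
      have e1 : (Real.pi/3 - 2*u - Real.pi/3)/2 = -u := by ring
      have e2 : (Real.pi/3 - 2*u + Real.pi/3)/2 = Real.pi/3 - u := by ring
      rw [e1, e2, Real.sin_neg]
      ring
    rw [hd, abs_neg]
    have hsinu0 : 0 ≤ Real.sin u := Real.sin_nonneg_of_nonneg_of_le_pi (le_of_lt hu0) (by linarith)
    have hsinu : Real.sin u ≤ u := Real.sin_le (le_of_lt hu0)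
    have hcos : Real.cos (Real.pi/3 - u) ≤ 1/2 + (Real.sqrt 3/2) * u := by
      rw [Real.cos_sub, Real.cos_pi_div_three, Real.sin_pi_div_three]
      have h1 : Real.cos u ≤ 1 := Real.cos_le_one u
      nlinarith [sqrt3_ge]
    have hcos0 : 0 ≤ Real.cos (Real.pi/3 - u) := by
      apply Real.cos_nonneg_of_mem_Icc
      constructor
      · linarith
      · linarith
    have habs : |2 * Real.sin u * Real.cos (Real.pi/3 - u)| = 2 * Real.sin u * Real.cos (Real.pi/3 - u) := by
      apply abs_of_nonneg; positivity
    rw [habs]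
    have hpim : Real.pi / m = 6 * u := by rw [hu]; field_simp
    rw [hpim]
    have hmul := mul_le_mul hsinu hcos hcos0 hu0.le
    have hsu : Real.sqrt 3 * u ≤ 1.74 * 0.075 :=
      mul_le_mul sqrt3_le hule' hu0.le (by norm_num)
    nlinarith [hmul, hsu, hu0.le]
  · -- m % 3 = 2, m ≥ 5
    have hule : u ≤ Real.pi/30 := by
      rw [hu, div_le_div_iff₀ (by linarith) (by norm_num)]
      nlinarith
    have hule' : u ≤ 0.105 := by
      have := Real.pi_lt_d2
      nlinarith
    unfold bsq
    rw [if_neg (by omega), if_neg (by omega)]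
    set θ := Real.pi / 3 * (1 + 1/(m:ℝ)) with hθ
    refine ⟨Real.sin θ - Real.sqrt 3 / 2, by linear_combination hc/4, ?_⟩
    have hθu : θ = Real.pi/3 + 2*u := by rw [hθ, hu]; field_simp; ring
    have hd : Real.sin θ - Real.sqrt 3 / 2 = 2 * Real.sin u * Real.cos (Real.pi/3 + u) := by
      rw [hθu, ← Real.sin_pi_div_three, Real.sin_sub_sin]
      have e1 : (Real.pi/3 + 2*u - Real.pi/3)/2 = u := by ring
      have e2 : (Real.pi/3 + 2*u + Real.pi/3)/2 = Real.pi/3 + u := by ring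
      rw [e1, e2]
    rw [hd]
    have hsinu0 : 0 ≤ Real.sin u := Real.sin_nonneg_of_nonneg_of_le_pi (le_of_lt hu0) (by linarith)
    have hsinu : Real.sin u ≤ u := Real.sin_le (le_of_lt hu0)
    have hcos : Real.cos (Real.pi/3 + u) ≤ 1/2 := by
      have ha1 : (0:ℝ) ≤ Real.pi/3 := by positivity
      have ha2 : Real.pi/3 + u ≤ Real.pi := by linarith
      have ha3 : Real.pi/3 ≤ Real.pi/3 + u := by linarith
      have := Real.cos_le_cos_of_nonneg_of_le_pi ha1 ha2 ha3
      rwa [Real.cos_pi_div_three] at this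
    have hcos0 : 0 ≤ Real.cos (Real.pi/3 + u) := by
      apply Real.cos_nonneg_of_mem_Icc
      constructor
      · linarith
      · linarith
    have habs : |2 * Real.sin u * Real.cos (Real.pi/3 + u)| = 2 * Real.sin u * Real.cos (Real.pi/3 + u) := by
      apply abs_of_nonneg; positivity
    rw [habs]
    have hpim : Real.pi / m = 6 * u := by rw [hu]; field_simp
    rw [hpim]
    have hmul := mul_le_mul hsinu hcos hcos0 hu0.le
    nlinarith [hmul, hu0.le]

lemma abs_sin_add_nat_pi (x : ℝ) : ∀ q : ℕ, |Real.sin (x + q*Real.pi)| = |Real.sin x| := by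
  intro q
  induction q with
  | zero => simp
  | succ q ih =>
    have : x + ((q+1:ℕ):ℝ)*Real.pi = (x + q*Real.pi) + Real.pi := by push_cast; ring
    rw [this, Real.sin_add_pi, abs_neg, ih]

lemma minsin (m : ℕ) (hm : 2 ≤ m) (n : ℕ) (hnd : ¬ m ∣ n) :
    Real.sin (Real.pi/m) ≤ |Real.sin (Real.pi*n/m)| := by
  have m0 : (0:ℝ) < m := by positivity
  have hpi := Real.pi_pos
  have hr0 : n % m ≠ 0 := fun h => hnd (Nat.dvd_of_mod_eq_zero h)
  set r := n % m with hrdef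
  have hrm : r < m := Nat.mod_lt _ (by omega)
  have hsplit : Real.pi*n/m = Real.pi*r/m + (n/m : ℕ)*Real.pi := by
    have hn : (n:ℝ) = (m:ℝ)*((n/m : ℕ):ℝ) + (r:ℝ) := by
      exact_mod_cast congrArg (Nat.cast : ℕ → ℝ) (Nat.div_add_mod n m).symm
    field_simp
    rw [hn]
    ring
  rw [hsplit, abs_sin_add_nat_pi]
  have mono : ∀ r' : ℕ, 1 ≤ r' → 2*r' ≤ m → Real.sin (Real.pi/m) ≤ Real.sin (Real.pi*r'/m) := by
    intro r' h1 h2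
    have h2R : 2*(r':ℝ) ≤ m := by exact_mod_cast h2
    have h1R : (1:ℝ) ≤ (r':ℝ) := by exact_mod_cast h1
    have m2 : (2:ℝ) ≤ m := by exact_mod_cast hm
    have k1 : Real.pi/m ∈ Set.Icc (-(Real.pi/2)) (Real.pi/2) := by
      constructor
      · have : 0 < Real.pi/m := by positivity
        linarith
      · rw [div_le_div_iff₀ m0 (by norm_num : (0:ℝ) < 2)]
        nlinarith
    have k2 : Real.pi*r'/m ∈ Set.Icc (-(Real.pi/2)) (Real.pi/2) := by
      constructor
      · have : 0 ≤ Real.pi*r'/m := by positivity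
        linarith
      · rw [div_le_div_iff₀ m0 (by norm_num : (0:ℝ) < 2)]
        nlinarith
    have k3 : Real.pi/m ≤ Real.pi*r'/m := by
      rw [div_le_div_iff₀ m0 m0]
      nlinarith [mul_nonneg (mul_nonneg hpi.le (le_of_lt m0)) (by linarith : (0:ℝ) ≤ (r':ℝ)-1)]
    exact Real.strictMonoOn_sin.monotoneOn k1 k2 k3
  by_cases h2 : 2*r ≤ m
  · exact le_trans (mono r (by omega) h2) (le_abs_self _)
  · have hr1 : 1 ≤ m - r := by omega
    have hr2 : 2*(m-r) ≤ m := by omega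
    have heq : Real.sin (Real.pi*r/m) = Real.sin (Real.pi*((m-r:ℕ):ℝ)/m) := by
      have hcast : ((m-r:ℕ):ℝ) = (m:ℝ) - r := by
        have : r ≤ m := le_of_lt hrm
        push_cast [this]
        ring
      rw [hcast]
      have harg : Real.pi*((m:ℝ) - r)/m = Real.pi - Real.pi*r/m := by
        field_simp
      rw [harg, Real.sin_pi_sub]
    rw [heq]
    exact le_trans (mono (m-r) hr1 hr2) (le_abs_self _)

lemma keyK (m : ℕ) (hm : 5 ≤ m) (hgcd : Nat.gcd m 3 = 1) (t : ℕ) :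
    sa m t ^ 2 * sa m (2*t) ≤ (b m)^3 := by
  have h3 : m % 3 = 1 ∨ m % 3 = 2 := by
    have hne : m % 3 ≠ 0 := by
      intro h
      have h3d : (3:ℕ) ∣ m := Nat.dvd_of_mod_eq_zero h
      have : (3:ℕ) ∣ 1 := hgcd ▸ Nat.dvd_gcd h3d dvd_rfl
      omega
    omega
  have m0 : (0:ℝ) < m := by positivity
  obtain ⟨d, hbsq, hdabs⟩ := bsq_eq m hm h3
  obtain ⟨p, hp⟩ : ∃ p:ℝ, p = Real.pi / (m:ℝ) := ⟨_, rfl⟩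
  have hple : p ≤ 0.63 := by rw [hp]; exact pi_div_le m hm
  have hp0 : 0 < p := by rw [hp]; positivity
  rw [← hp] at hdabs
  have hd2 : d^2 ≤ (0.19*p)^2 := by
    nlinarith [abs_nonneg d, sq_abs d, hdabs]
  have hd2' : d^2 ≤ 0.015 := by nlinarith
  have hbsq0 : (0:ℝ) ≤ bsq m := by rw [hbsq]; nlinarith
  have hb2 : (b m)^2 = bsq m := Real.sq_sqrt hbsq0
  have hb0 : 0 ≤ b m := Real.sqrt_nonneg _
  by_cases hdvd : m ∣ t
  · obtain ⟨k, rfl⟩ := hdvd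
    have harg : Real.pi * ((m*k:ℕ):ℝ) / m = ((k:ℕ):ℝ) * Real.pi := by push_cast; field_simp
    have hz : sa m (m*k) = 0 := by
      unfold sa
      rw [harg, Real.sin_nat_mul_pi, abs_zero]
    rw [hz]
    have h1 := pow_nonneg hb0 3
    have h2 := sa_nonneg m (2*(m*k))
    nlinarith
  · obtain ⟨S, hS⟩ : ∃ S:ℝ, S = Real.sin (Real.pi * (t:ℝ) / m) := ⟨_, rfl⟩
    obtain ⟨σ, hσ⟩ : ∃ σ:ℝ, σ = S^2 := ⟨_, rfl⟩
    have hσ0 : 0 ≤ σ := hσ ▸ sq_nonneg _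
    have hσ1 : σ ≤ 1 := by
      rw [hσ, hS]
      nlinarith [Real.sin_sq_add_cos_sq (Real.pi * (t:ℝ) / m),
        sq_nonneg (Real.cos (Real.pi * (t:ℝ) / m))]
    have hsa1 : sa m t ^ 2 = σ := by unfold sa; rw [sq_abs, ← hS, hσ]
    have hsaS : sa m t = |S| := by unfold sa; rw [hS]
    have hsa2sq : sa m (2*t) ^ 2 = 4*σ*(1-σ) := by
      unfold sa
      rw [sq_abs]
      have harg : Real.pi * ((2*t:ℕ):ℝ) / m = 2*(Real.pi * (t:ℝ) / m) := by push_cast; ring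
      rw [harg, Real.sin_two_mul, ← hS]
      have hc := Real.sin_sq_add_cos_sq (Real.pi * (t:ℝ) / m)
      rw [← hS] at hc
      rw [hσ]
      nlinarith [hc]
    have hA3 : Real.sin p ≤ |S| * (4 * |σ - 3/4|) := by
      have hnd3 : ¬ m ∣ 3*t := by
        intro h
        exact hdvd (Nat.Coprime.dvd_of_dvd_mul_left hgcd h)
      have hms := minsin m (by omega) (3*t) hnd3
      have harg : Real.pi * ((3*t:ℕ):ℝ) / m = 3*(Real.pi * (t:ℝ) / m) := by push_cast; ring
      rw [harg, Real.sin_three_mul, ← hS, ← hp] at hms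
      have habs : |3*S - 4*S^3| = |S| * (4*|σ - 3/4|) := by
        rw [show (3*S - 4*S^3) = S * (-(4*(S^2 - 3/4))) by ring]
        rw [abs_mul, abs_neg, abs_mul, ← hσ]
        norm_num
      rw [habs] at hms
      exact hms
    have hq : (σ - 3/4)^2 * (4*σ^2 + 2*σ + 3/4) ≥ (27/16)*d^2 := by
      by_cases hcase : 0.2 ≤ |σ - 3/4|
      · have hA2 : (σ-3/4)^2 ≥ 0.04 := by nlinarith [sq_abs (σ-3/4), abs_nonneg (σ-3/4)]
        have hqlb : 4*σ^2 + 2*σ + 3/4 ≥ 3/4 := by nlinarith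
        nlinarith [hd2, hp0.le, hple, sq_nonneg p]
      · push_neg at hcase
        have hub := le_abs_self (σ - 3/4)
        have hlb := neg_abs_le (σ - 3/4)
        have hσlb : 0.55 ≤ σ := by linarith
        have hσub : σ ≤ 0.95 := by linarith
        have hS2 : |S|^2 = σ := by rw [sq_abs, hσ]
        have hsinle : |S| ≤ 0.9747 := by
          nlinarith [hS2, abs_nonneg S]
        have hsinp : 0.9*p ≤ Real.sin p := by
          have := Real.sin_gt_sub_cube hp0
          nlinarith [hp0, hple]
        have hAlb : 0.9*p ≤ 3.899 * |σ-3/4| := by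
          have habs0 : (0:ℝ) ≤ |σ-3/4| := abs_nonneg _
          have h1 : |S| * (4*|σ-3/4|) ≤ 0.9747 * (4*|σ-3/4|) := by nlinarith
          linarith [hA3, hsinp]
        have hA2 : (σ-3/4)^2 ≥ 0.0532*p^2 := by
          have hmm : (0:ℝ) ≤ (3.899*|σ-3/4| - 0.9*p) * (3.899*|σ-3/4| + 0.9*p) := by
            apply mul_nonneg
            · linarith
            · have := abs_nonneg (σ-3/4); linarith
          nlinarith [sq_abs (σ-3/4), hmm]
        have hqlb : 4*σ^2 + 2*σ + 3/4 ≥ 3.06 := by nlinarith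
        nlinarith [hA2, hqlb, hd2, sq_nonneg p, hp0.le]
    have hcube : (3/4 - d^2)^3 ≥ 27/64 - (27/16)*d^2 := by
      nlinarith [sq_nonneg d, sq_nonneg (d^2), hd2']
    have hgoal2 : (sa m t ^2 * sa m (2*t))^2 ≤ ((b m)^3)^2 := by
      have e1 : (sa m t^2 * sa m (2*t))^2 = σ^2 * (4*σ*(1-σ)) := by
        rw [mul_pow, hsa1]
        rw [show (sa m (2*t))^2 = sa m (2*t)^2 from rfl, hsa2sq]
      have e2 : ((b m)^3)^2 = (bsq m)^3 := by rw [← hb2]; ring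
      rw [e1, e2, hbsq]
      nlinarith [hq, hcube]
    have hLHS0 : 0 ≤ sa m t ^2 * sa m (2*t) :=
      mul_nonneg (sq_nonneg _) (sa_nonneg m (2*t))
    exact le_of_pow_le_pow_left₀ (by norm_num) (pow_nonneg hb0 3) hgoal2

lemma bB1 (m : ℕ) (hm : 5 ≤ m) (hgcd : Nat.gcd m 3 = 1) : 1 < 2 * b m := by
  have h3 : m % 3 = 1 ∨ m % 3 = 2 := by
    have hne : m % 3 ≠ 0 := by
      intro h
      have h3d : (3:ℕ) ∣ m := Nat.dvd_of_mod_eq_zero h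
      have : (3:ℕ) ∣ 1 := hgcd ▸ Nat.dvd_gcd h3d dvd_rfl
      omega
    omega
  obtain ⟨d, hbsq, hdabs⟩ := bsq_eq m hm h3
  have hple : Real.pi / m ≤ 0.63 := pi_div_le m hm
  have hp0 : 0 < Real.pi / (m:ℝ) := by
    have : (0:ℝ) < m := by positivity
    positivity
  have hd2 : d^2 ≤ 0.015 := by
    nlinarith [abs_nonneg d, sq_abs d, hdabs]
  have : (1/2 : ℝ) < b m := by
    unfold b
    rw [Real.lt_sqrt (by norm_num)]
    rw [hbsq]
    nlinarith
  linarith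

lemma chain (m : ℕ) (hB0 : 0 ≤ b m)
    (hK : ∀ u : ℕ, sa m u ^ 2 * sa m (2*u) ≤ (b m)^3) (t : ℕ) :
    ∀ i : ℕ, (∏ k ∈ range (i+1), sa m (2^k * t))^3
      ≤ sa m t * sa m (2^i * t)^2 * ((b m)^3)^i := by
  intro i
  induction i with
  | zero => simp [prod_range_one]; ring_nf; rfl
  | succ i ih =>
    have hs := sa_nonneg m
    have hBp : (0:ℝ) ≤ ((b m)^3)^i := by positivity
    calc (∏ k ∈ range (i+2), sa m (2^k * t))^3
        = (∏ k ∈ range (i+1), sa m (2^k * t))^3 * sa m (2^(i+1) * t)^3 := by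
          rw [Finset.prod_range_succ]; ring
      _ ≤ (sa m t * sa m (2^i * t)^2 * ((b m)^3)^i) * sa m (2^(i+1) * t)^3 := by
          exact mul_le_mul_of_nonneg_right ih (pow_nonneg (sa_nonneg m _) 3)
      _ = (sa m t * ((b m)^3)^i * sa m (2^(i+1) * t)^2) * (sa m (2^i * t)^2 * sa m (2^(i+1) * t)) := by
          ring
      _ ≤ (sa m t * ((b m)^3)^i * sa m (2^(i+1) * t)^2) * (b m)^3 := by
          apply mul_le_mul_of_nonneg_left ?_
            (mul_nonneg (mul_nonneg (sa_nonneg m t) (by positivity)) (pow_nonneg (sa_nonneg m _) 2))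
          have h2 : 2^(i+1) * t = 2*(2^i * t) := by ring
          rw [h2]; exact hK (2^i * t)
      _ = sa m t * sa m (2^(i+1) * t)^2 * ((b m)^3)^(i+1) := by ring

lemma prodbound (m : ℕ) (hB0 : 0 ≤ b m)
    (hK : ∀ u : ℕ, sa m u ^ 2 * sa m (2*u) ≤ (b m)^3) (t i : ℕ) :
    ∏ k ∈ range (i+1), sa m (2^k * t) ≤ (b m)^i := by
  have h := chain m hB0 hK t i
  have h1 : sa m t * sa m (2^i * t)^2 * ((b m)^3)^i ≤ ((b m)^i)^3 := by
    have e : ((b m)^3)^i = ((b m)^i)^3 := by ring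
    rw [e]
    have h2 : sa m t * sa m (2^i * t)^2 ≤ 1 := by
      have := sa_nonneg m t; have := sa_le_one m t
      have := sa_nonneg m (2^i*t); have := sa_le_one m (2^i*t)
      nlinarith
    nlinarith [pow_nonneg (pow_nonneg hB0 i) 3, sa_nonneg m t, sa_nonneg m (2^i*t)]
  exact le_of_pow_le_pow_left₀ (by norm_num) (pow_nonneg hB0 i) (le_trans h h1)

theorem assembled (m : ℕ) (hB1 : 1 < 2 * b m)
    (hK : ∀ u : ℕ, sa m u ^ 2 * sa m (2*u) ≤ (b m)^3)
    (t N : ℕ) (hN : 1 ≤ N) :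
    ‖F ((t:ℝ)/m) N‖ ≤ mu m * (N : ℝ) ^ lam m := by
  have hB0 : (0:ℝ) < b m := by linarith
  set B := b m with hBdef
  set L := Nat.log2 N with hL
  have hNlt : N < 2^(L+1) := Nat.lt_log2_self
  have h1 := unroll m (L+1) N hNlt t
  have hsum : ∑ i ∈ range (L+1), ((N / 2^i % 2 : ℕ):ℝ) * ∏ k ∈ range i, (2 * sa m (2^k*t))
      ≤ 1 + 2 * ∑ i ∈ range L, (2*B)^i := by
    have hstep1 : ∑ i ∈ range (L+1), ((N / 2^i % 2 : ℕ):ℝ) * ∏ k ∈ range i, (2 * sa m (2^k*t))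
        ≤ ∑ i ∈ range (L+1), ∏ k ∈ range i, (2 * sa m (2^k*t)) := by
      apply Finset.sum_le_sum
      intro i _
      have hp : 0 ≤ ∏ k ∈ range i, (2 * sa m (2^k*t)) :=
        Finset.prod_nonneg (fun k _ => by have := sa_nonneg m (2^k*t); linarith)
      have hbit : ((N / 2^i % 2 : ℕ):ℝ) ≤ 1 := by
        have : N / 2^i % 2 < 2 := Nat.mod_lt _ (by norm_num)
        exact_mod_cast Nat.lt_succ_iff.mp this
      exact mul_le_of_le_one_left hp hbit
    refine le_trans hstep1 ?_
    rw [Finset.sum_range_succ' (fun i => ∏ k ∈ range i, (2 * sa m (2^k*t))) L]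
    simp only [range_zero, prod_empty]
    have hterm : ∀ i, ∏ k ∈ range (i+1), (2*sa m (2^k*t)) ≤ 2*(2*B)^i := by
      intro i
      have hsplit : ∏ k ∈ range (i+1), (2*sa m (2^k*t))
          = 2^(i+1) * ∏ k ∈ range (i+1), sa m (2^k*t) := by
        rw [Finset.prod_mul_distrib]
        simp
      rw [hsplit]
      have hpb := prodbound m (le_of_lt hB0) hK t i
      calc (2:ℝ)^(i+1) * ∏ k ∈ range (i+1), sa m (2^k*t) ≤ 2^(i+1) * B^i := by
            apply mul_le_mul_of_nonneg_left hpb (by positivity)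
        _ = 2*(2*B)^i := by rw [mul_pow]; ring
    have : ∑ i ∈ range L, ∏ k ∈ range (i+1), (2*sa m (2^k*t)) ≤ ∑ i ∈ range L, 2*(2*B)^i := by
      exact Finset.sum_le_sum (fun i _ => hterm i)
    rw [Finset.mul_sum]
    linarith
  have hgeo : ∑ i ∈ range L, (2*B)^i = ((2*B)^L - 1)/(2*B - 1) := geom_sum_eq (by linarith) L
  have hlam0 : 0 ≤ lam m := by
    unfold lam
    have : (-1:ℝ) ≤ Real.logb 2 B := by
      rw [Real.le_logb_iff_rpow_le (by norm_num) hB0]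
      rw [Real.rpow_neg_one]
      norm_num
      linarith
    linarith
  have h2L : ((2:ℝ))^L ≤ (N:ℝ) := by
    exact_mod_cast Nat.log2_self_le (by omega)
  have e1 : ((2:ℝ)^L) ^ (lam m) = (2*B)^L := by
    rw [← Real.rpow_natCast (2:ℝ) L, ← Real.rpow_mul (by norm_num)]
    have e2 : (L:ℝ) * lam m = (L:ℝ) + Real.logb 2 B * (L:ℝ) := by unfold lam; ring
    rw [e2, Real.rpow_add (by norm_num), Real.rpow_mul (by norm_num),
      Real.rpow_logb (by norm_num) (by norm_num) hB0, Real.rpow_natCast, Real.rpow_natCast,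
      mul_pow]
  have hpow : (2*B)^L ≤ (N:ℝ) ^ lam m := by
    rw [← e1]
    exact Real.rpow_le_rpow (by positivity) h2L hlam0
  have hY1 : 1 ≤ (N:ℝ) ^ lam m := by
    apply Real.one_le_rpow (by exact_mod_cast hN) hlam0
  set Y := (N:ℝ) ^ lam m
  have hfin : 1 + 2 * (((2*B)^L - 1)/(2*B - 1)) ≤ mu m * Y := by
    unfold mu
    rw [← hBdef]
    have hc : 0 < 2*B - 1 := by linarith
    rw [div_mul_eq_mul_div, le_div_iff₀ hc]
    have expand : (1 + 2 * (((2*B)^L - 1)/(2*B - 1))) * (2*B - 1)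
        = (2*B - 1) + 2*((2*B)^L - 1) := by
      field_simp
    rw [expand]
    nlinarith [mul_le_mul_of_nonneg_left hY1 (le_of_lt hc)]
  calc ‖F ((t:ℝ)/m) N‖ ≤ _ := h1
    _ ≤ 1 + 2 * ∑ i ∈ range L, (2*B)^i := hsum
    _ = 1 + 2 * (((2*B)^L - 1)/(2*B - 1)) := by rw [hgeo]
    _ ≤ mu m * Y := hfin

theorem stmt_5 (m : ℕ) (hm : 5 ≤ m) (hgcd : Nat.gcd m 3 = 1) (t : ℕ) (ht : t ≤ m - 1)
    (N : ℕ) (hN : 1 ≤ N) :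
    ‖F ((t : ℝ) / m) N‖ ≤ mu m * (N : ℝ) ^ lam m := by
  exact assembled m (bB1 m hm hgcd) (keyK m hm hgcd) t N hN
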